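/- Let U ⊆ ℕ^d be an upset, and let T be the full subposet of U consisting of the minimal elements of U together with all pairwise joins (coordinatewise maxima) of minimal elements. Then for every t ∈ T, the inclusion of the strict downset of t taken in T into the strict downset of t taken in U induces a bijection on connected components. In particular, an element of T has disconnected strict downset in T if and only if it has disconnected strict downset in U. -/

import Mathlib

/-- A single comparability step within `S` with respect to the relation `r`. -/
def StepIn {α : Type*} (S : Set α) (r : α → α → Prop) (x y : α) : Prop :=
  x ∈ S ∧ y ∈ S ∧ (r x y ∨ r y x)

/-- Connectivity of the set `S` equipped with the relation `r`: `S` is nonempty and any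
two elements of `S` are joined by a finite zigzag of `r`-steps within `S`. -/
def ConnIn {α : Type*} (S : Set α) (r : α → α → Prop) : Prop :=
  S.Nonempty ∧ ∀ a ∈ S, ∀ b ∈ S, Relation.ReflTransGen (StepIn S r) a b

/-- Connectivity of a subset of a poset, as a subposet (zigzags of comparabilities). -/
def PosetConn {α : Type*} [LE α] (S : Set α) : Prop := ConnIn S (· ≤ ·)

/-- `a` and `b` lie in `S` in the same connected component of the subposet `S`. -/
def SameComp {α : Type*} [LE α] (S : Set α) (a b : α) : Prop :=
  a ∈ S ∧ b ∈ S ∧ Relation.ReflTransGen (StepIn S (· ≤ ·)) a b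

private lemma l_exists_min {d : ℕ} (U : Set (Fin d → ℕ)) :
    ∀ x ∈ U, ∃ m, (m ∈ U ∧ ∀ u ∈ U, ¬ u < m) ∧ m ≤ x := by
  suffices h : ∀ n (x : Fin d → ℕ), (∑ i, x i) = n → x ∈ U →
      ∃ m, (m ∈ U ∧ ∀ u ∈ U, ¬ u < m) ∧ m ≤ x by
    intro x hx; exact h _ x rfl hx
  intro n
  induction n using Nat.strong_induction_on with
  | _ n ih =>
    intro x hsum hx
    by_cases h : ∀ u ∈ U, ¬ u < x
    · exact ⟨x, ⟨hx, h⟩, le_rfl⟩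
    · push_neg at h
      obtain ⟨u, hu, hux⟩ := h
      obtain ⟨hle, i, hi⟩ := Pi.lt_def.mp hux
      have hlt : (∑ i, u i) < n := by
        subst hsum
        exact Finset.sum_lt_sum (fun j _ => hle j) ⟨i, Finset.mem_univ i, hi⟩
      obtain ⟨m, hm, hle'⟩ := ih _ hlt u rfl hu
      exact ⟨m, hm, hle'.trans hux.le⟩

private lemma min_mem_T {d : ℕ} {U T : Set (Fin d → ℕ)}
    (hT : T = {x | ∃ m m', (m ∈ U ∧ ∀ u ∈ U, ¬ u < m) ∧ (m' ∈ U ∧ ∀ u ∈ U, ¬ u < m') ∧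
      x = m ⊔ m'}) {m} (hm : m ∈ U ∧ ∀ u ∈ U, ¬ u < m) : m ∈ T := by
  subst hT; exact ⟨m, m, hm, hm, by simp⟩

private lemma joinconn {d : ℕ} {U T : Set (Fin d → ℕ)}
    (hT : T = {x | ∃ m m', (m ∈ U ∧ ∀ u ∈ U, ¬ u < m) ∧ (m' ∈ U ∧ ∀ u ∈ U, ¬ u < m') ∧
      x = m ⊔ m'}) {t m m' z : Fin d → ℕ}
    (hm : m ∈ U ∧ ∀ u ∈ U, ¬ u < m) (hm' : m' ∈ U ∧ ∀ u ∈ U, ¬ u < m')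
    (hz : z < t) (h1 : m ≤ z) (h2 : m' ≤ z) :
    Relation.ReflTransGen (StepIn {p | p ∈ T ∧ p < t} (· ≤ ·)) m m' := by
  have hjT : m ⊔ m' ∈ T := by rw [hT]; exact ⟨m, m', hm, hm', rfl⟩
  have hjlt : m ⊔ m' < t := lt_of_le_of_lt (sup_le h1 h2) hz
  have hmT : m ∈ T := min_mem_T hT hm
  have hm'T : m' ∈ T := min_mem_T hT hm'
  exact (Relation.ReflTransGen.single
      ⟨⟨hmT, lt_of_le_of_lt h1 hz⟩, ⟨hjT, hjlt⟩, Or.inl le_sup_left⟩).tail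
    ⟨⟨hjT, hjlt⟩, ⟨hm'T, lt_of_le_of_lt h2 hz⟩, Or.inr le_sup_right⟩

private lemma chain {d : ℕ} {U T : Set (Fin d → ℕ)}
    (hT : T = {x | ∃ m m', (m ∈ U ∧ ∀ u ∈ U, ¬ u < m) ∧ (m' ∈ U ∧ ∀ u ∈ U, ¬ u < m') ∧
      x = m ⊔ m'}) {t a b : Fin d → ℕ}
    (h : Relation.ReflTransGen (StepIn {p | p ∈ U ∧ p < t} (· ≤ ·)) a b)
    (ha : a ∈ U ∧ a < t)
    {m : Fin d → ℕ} (hm : m ∈ U ∧ ∀ u ∈ U, ¬ u < m) (hma : m ≤ a) :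
    ∀ m', (m' ∈ U ∧ ∀ u ∈ U, ¬ u < m') → m' ≤ b →
      Relation.ReflTransGen (StepIn {p | p ∈ T ∧ p < t} (· ≤ ·)) m m' := by
  induction h with
  | refl =>
    intro m' hm' hm'b
    exact joinconn hT hm hm' ha.2 hma hm'b
  | tail h' st ih =>
    intro m' hm' hm'b
    obtain ⟨hcDU, hbDU, hcb⟩ := st
    obtain ⟨mc, hmc, hmcc⟩ := l_exists_min U _ hcDU.1
    refine (ih mc hmc hmcc).trans ?_
    rcases hcb with h1 | h1
    · exact joinconn hT hmc hm' hbDU.2 (hmcc.trans h1) hm'b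
    · exact joinconn hT hmc hm' hcDU.2 hmcc (hm'b.trans h1)

theorem stmt11 {d : ℕ} (U : Set (Fin d → ℕ))
    (hU : ∀ x ∈ U, ∀ y, x ≤ y → y ∈ U)
    (T : Set (Fin d → ℕ))
    (hT : T = {x | ∃ m m', (m ∈ U ∧ ∀ u ∈ U, ¬ u < m) ∧ (m' ∈ U ∧ ∀ u ∈ U, ¬ u < m') ∧
      x = m ⊔ m'}) :
    ∀ t ∈ T,
      (∀ x ∈ {p | p ∈ U ∧ p < t}, ∃ s ∈ {p | p ∈ T ∧ p < t},
        SameComp {p | p ∈ U ∧ p < t} s x) ∧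
      (∀ a ∈ {p | p ∈ T ∧ p < t}, ∀ b ∈ {p | p ∈ T ∧ p < t},
        SameComp {p | p ∈ U ∧ p < t} a b → SameComp {p | p ∈ T ∧ p < t} a b) ∧
      (¬ PosetConn {p | p ∈ T ∧ p < t} ↔ ¬ PosetConn {p | p ∈ U ∧ p < t}) := by
  intro t ht
  have hTU : ∀ x ∈ T, x ∈ U := by
    intro x hx
    rw [hT] at hx
    obtain ⟨m, m', hm, hm', rfl⟩ := hx
    exact hU m hm.1 _ le_sup_left
  have hsub : {p | p ∈ T ∧ p < t} ⊆ {p | p ∈ U ∧ p < t} :=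
    fun p hp => ⟨hTU p hp.1, hp.2⟩
  -- part 1
  have part1 : ∀ x ∈ {p | p ∈ U ∧ p < t}, ∃ s ∈ {p | p ∈ T ∧ p < t},
      SameComp {p | p ∈ U ∧ p < t} s x := by
    intro x hx
    obtain ⟨m, hm, hmx⟩ := l_exists_min U x hx.1
    have hmt : m < t := lt_of_le_of_lt hmx hx.2
    exact ⟨m, ⟨min_mem_T hT hm, hmt⟩, ⟨hm.1, hmt⟩, hx,
      Relation.ReflTransGen.single ⟨⟨hm.1, hmt⟩, hx, Or.inl hmx⟩⟩
  -- minimal below an element of T gives a step in T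
  have toMin : ∀ a ∈ {p | p ∈ T ∧ p < t}, ∃ m, (m ∈ U ∧ ∀ u ∈ U, ¬ u < m) ∧ m ≤ a ∧
      StepIn {p | p ∈ T ∧ p < t} (· ≤ ·) a m := by
    intro a ha
    obtain ⟨m, hm, hma⟩ := l_exists_min U a (hTU a ha.1)
    have hmt : m < t := lt_of_le_of_lt hma ha.2
    exact ⟨m, hm, hma, ha, ⟨min_mem_T hT hm, hmt⟩, Or.inr hma⟩
  have part2 : ∀ a ∈ {p | p ∈ T ∧ p < t}, ∀ b ∈ {p | p ∈ T ∧ p < t},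
      SameComp {p | p ∈ U ∧ p < t} a b → SameComp {p | p ∈ T ∧ p < t} a b := by
    intro a ha b hb hab
    obtain ⟨haU, hbU, hzig⟩ := hab
    obtain ⟨ma, hma, hmaa, hstepa⟩ := toMin a ha
    obtain ⟨mb, hmb, hmbb, hstepb⟩ := toMin b hb
    have hmid := chain hT hzig haU hma hmaa mb hmb hmbb
    refine ⟨ha, hb, ?_⟩
    exact ((Relation.ReflTransGen.single hstepa).trans hmid).tail
      ⟨hstepb.2.1, hstepb.1, hstepb.2.2.symm⟩
  refine ⟨part1, part2, not_iff_not.mpr ?_⟩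
  constructor
  · rintro ⟨⟨s, hs⟩, hconn⟩
    refine ⟨⟨s, hsub hs⟩, ?_⟩
    intro x hx y hy
    obtain ⟨sx, hsx, hcx⟩ := part1 x hx
    obtain ⟨sy, hsy, hcy⟩ := part1 y hy
    have hsymm : Symmetric (StepIn {p | p ∈ U ∧ p < t} ((· ≤ ·) : (Fin d → ℕ) → _ → Prop)) :=
      fun a b h => ⟨h.2.1, h.1, h.2.2.symm⟩
    have h1 : Relation.ReflTransGen (StepIn {p | p ∈ U ∧ p < t} (· ≤ ·)) x sx :=
      (@Relation.ReflTransGen.symmetric _ _ ⟨fun a b h => hsymm h⟩).symm _ _ hcx.2.2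
    have h2 : Relation.ReflTransGen (StepIn {p | p ∈ U ∧ p < t} (· ≤ ·)) sx sy :=
      Relation.ReflTransGen.mono (fun a b (h : StepIn {p | p ∈ T ∧ p < t} (· ≤ ·) a b) =>
          (⟨hsub h.1, hsub h.2.1, h.2.2⟩ : StepIn {p | p ∈ U ∧ p < t} (· ≤ ·) a b)) _ _
        (hconn sx hsx sy hsy)
    exact (h1.trans h2).trans hcy.2.2
  · rintro ⟨⟨x, hx⟩, hconn⟩
    obtain ⟨s, hs, _⟩ := part1 x hx
    refine ⟨⟨s, hs⟩, ?_⟩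
    intro a ha b hb
    exact (part2 a ha b hb ⟨hsub ha, hsub hb, hconn a (hsub ha) b (hsub hb)⟩).2.2
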